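/- arXiv:2311.09584 — 5 statements merged into one kernel-verified Lean document; each statement's English description precedes it below -/
import Mathlib

section
/- For any finite undirected simple graph G, if G* is an orientation of G minimizing the maximum outdegree and G^κ is the degeneracy orientation of G (an acyclic orientation whose maximum outdegree equals the degeneracy κ(G)), then the maximum outdegree of G^κ is at most twice the maximum outdegree of G*: Δ⁺(G^κ) ≤ 2·Δ⁺(G*). -/
variable {V : Type*}

/-- `D` is an orientation of the simple graph `G`: each edge gets exactly one direction. -/
def IsOrientation (G : SimpleGraph V) (D : V → V → Prop) : Prop :=
  (∀ u v, G.Adj u v ↔ (D u v ∨ D v u)) ∧ ∀ u v, ¬ (D u v ∧ D v u)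

/-- A directed graph (relation) is acyclic: no directed cycle through any vertex. -/
def DirAcyclic (D : V → V → Prop) : Prop := ∀ v, ¬ Relation.TransGen D v v

/-- The maximum outdegree Δ⁺ of an oriented graph. -/
noncomputable def maxOutdeg [Fintype V] (D : V → V → Prop) : ℕ :=
  Finset.univ.sup fun v => ({w | D v w}).ncard

/-- The degeneracy of `G`: the maximum over all (induced) subgraphs of the minimum degree. -/
noncomputable def degeneracy [Fintype V] (G : SimpleGraph V) : ℕ :=
  sSup {k | ∃ s : Set V, s.Nonempty ∧ ∀ v ∈ s, k ≤ (s ∩ {w | G.Adj v w}).ncard}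

theorem degeneracy_le_two_mul_maxOutdeg [Fintype V] (G : SimpleGraph V) (D : V → V → Prop)
    (hD : IsOrientation G D) : degeneracy G ≤ 2 * maxOutdeg D := by
  classical
  refine csSup_le' ?_
  rintro k ⟨s, hsne, hs⟩
  set t := s.toFinset with ht
  have htne : t.Nonempty := Set.toFinset_nonempty.mpr hsne
  have hout : ∀ v, (t.filter fun w => D v w).card ≤ maxOutdeg D := by
    intro v
    have h1 : (t.filter fun w => D v w).card ≤ (Finset.univ.filter fun w => D v w).card :=
      Finset.card_le_card (by intro w hw; simp_all [Finset.mem_filter])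
    have h2 : ({w | D v w} : Set V).ncard = (Finset.univ.filter fun w => D v w).card := by
      rw [Set.ncard_eq_toFinset_card']; congr 1; ext w; simp
    calc (t.filter fun w => D v w).card ≤ (Finset.univ.filter fun w => D v w).card := h1
      _ = ({w | D v w} : Set V).ncard := h2.symm
      _ ≤ maxOutdeg D := Finset.le_sup (f := fun v => ({w | D v w} : Set V).ncard) (Finset.mem_univ v)
  -- degree split
  have hsplit : ∀ v, (t.filter fun w => G.Adj v w).card =
      (t.filter fun w => D v w).card + (t.filter fun w => D w v).card := by
    intro v
    have he : (t.filter fun w => G.Adj v w) =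
        (t.filter fun w => D v w) ∪ (t.filter fun w => D w v) := by
      ext w; simp [hD.1 v w, Finset.mem_filter, Finset.mem_union, and_or_left]
    rw [he, Finset.card_union_of_disjoint]
    exact Finset.disjoint_filter.mpr fun w _ h1 h2 => hD.2 v w ⟨h1, h2⟩
  have hswap : ∑ v ∈ t, (t.filter fun w => D w v).card =
      ∑ v ∈ t, (t.filter fun w => D v w).card := by
    simp only [Finset.card_filter]
    rw [Finset.sum_comm]
  have hk' : ∀ v ∈ t, k ≤ (t.filter fun w => G.Adj v w).card := by
    intro v hv
    have hv' : v ∈ s := Set.mem_toFinset.mp hv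
    have h := hs v hv'
    have : s ∩ {w | G.Adj v w} = ↑(t.filter fun w => G.Adj v w) := by
      ext w; simp [ht, Set.mem_toFinset]
    rwa [this, Set.ncard_coe_finset] at h
  have hmain : k * t.card ≤ 2 * maxOutdeg D * t.card := by
    calc k * t.card = ∑ _v ∈ t, k := by simp [Finset.sum_const, mul_comm]
      _ ≤ ∑ v ∈ t, (t.filter fun w => G.Adj v w).card := Finset.sum_le_sum hk'
      _ = ∑ v ∈ t, ((t.filter fun w => D v w).card + (t.filter fun w => D w v).card) := by
          simp only [hsplit]
      _ = 2 * ∑ v ∈ t, (t.filter fun w => D v w).card := by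
          rw [Finset.sum_add_distrib, hswap]; ring
      _ ≤ 2 * ∑ _v ∈ t, maxOutdeg D := by
          gcongr with v hv; exact hout v
      _ = 2 * maxOutdeg D * t.card := by rw [Finset.sum_const]; simp only [smul_eq_mul]; ring
  have hpos : 0 < t.card := Finset.card_pos.mpr htne
  exact Nat.le_of_mul_le_mul_right hmain hpos

/-- if `Dstar` is an orientation of `G` minimizing the maximum outdegree and
`Dk` is the degeneracy orientation (an acyclic orientation whose maximum outdegree equals
the degeneracy of `G`), then `Δ⁺(Dk) ≤ 2·Δ⁺(Dstar)`. -/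
theorem stmt1 [Fintype V] (G : SimpleGraph V) (Dstar Dk : V → V → Prop)
    (hstar : IsOrientation G Dstar)
    (hmin : ∀ D : V → V → Prop, IsOrientation G D → maxOutdeg Dstar ≤ maxOutdeg D)
    (hk : IsOrientation G Dk) (hkacyc : DirAcyclic Dk)
    (hkdeg : maxOutdeg Dk = degeneracy G) :
    maxOutdeg Dk ≤ 2 * maxOutdeg Dstar := by
  rw [hkdeg]
  exact degeneracy_le_two_mul_maxOutdeg G Dstar hstar
end

section
/- Let G be a finite simple graph and let k ≥ 3. Let G_t be the graph obtained from G by subdividing each edge exactly t times (replacing each edge by a path with t internal vertices), where k = 3(t+1). Then G contains a triangle if and only if G_t contains a cycle of length k. -/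
variable {V : Type*} [LinearOrder V]

/-- The smaller endpoint of an (unordered) edge. -/
def sMin (e : Sym2 V) : V := Sym2.lift ⟨fun a b => min a b, fun a b => min_comm a b⟩ e

/-- The larger endpoint of an (unordered) edge. -/
def sMax (e : Sym2 V) : V := Sym2.lift ⟨fun a b => max a b, fun a b => max_comm a b⟩ e

/-- The graph `G_t` obtained from `G` by subdividing each edge exactly `t` times:
each edge `e = (u,w)` (with `u = sMin e`, `w = sMax e`) is replaced by the path
`u, (e,0), (e,1), …, (e,t-1), w`.  (When `t = 0` the edge is kept as is.) -/
def Subdiv (G : SimpleGraph V) (t : ℕ) :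
    SimpleGraph (V ⊕ (G.edgeSet × Fin t)) :=
  SimpleGraph.fromRel fun a b =>
    match a, b with
    | Sum.inl u, Sum.inl w => t = 0 ∧ G.Adj u w
    | Sum.inl u, Sum.inr (e, i) =>
        (i.val = 0 ∧ u = sMin (e : Sym2 V)) ∨ (i.val = t - 1 ∧ u = sMax (e : Sym2 V))
    | Sum.inr (e, i), Sum.inr (e', j) => (e : Sym2 V) = (e' : Sym2 V) ∧ j.val = i.val + 1
    | _, _ => False

set_option linter.unusedSectionVars false

section Lemmas
variable {G : SimpleGraph V} {t : ℕ}

lemma sMin_mk (a b : V) : sMin s(a,b) = min a b := rfl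
lemma sMax_mk (a b : V) : sMax s(a,b) = max a b := rfl

lemma sMk_sMin_sMax (e : Sym2 V) : s(sMin e, sMax e) = e := by
  induction e using Sym2.ind with
  | _ a b =>
    rw [sMin_mk, sMax_mk]
    rcases le_total a b with h | h
    · rw [min_eq_left h, max_eq_right h]
    · rw [min_eq_right h, max_eq_left h, Sym2.eq_swap]

lemma adj_sMin_sMax (e : G.edgeSet) : G.Adj (sMin (e : Sym2 V)) (sMax (e : Sym2 V)) :=
  G.mem_edgeSet.1 (by rw [sMk_sMin_sMax]; exact e.2)

lemma adj_inl_inl {u w : V} :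
    (Subdiv G t).Adj (Sum.inl u) (Sum.inl w) ↔ t = 0 ∧ G.Adj u w := by
  rw [Subdiv, SimpleGraph.fromRel_adj]
  constructor
  · rintro ⟨-, ⟨h0, h⟩ | ⟨h0, h⟩⟩
    · exact ⟨h0, h⟩
    · exact ⟨h0, h.symm⟩
  · rintro ⟨h0, h⟩
    exact ⟨by simpa using h.ne, Or.inl ⟨h0, h⟩⟩

lemma adj_inl_inr {u : V} {e : G.edgeSet} {i : Fin t} :
    (Subdiv G t).Adj (Sum.inl u) (Sum.inr (e, i)) ↔
      (i.val = 0 ∧ u = sMin (e : Sym2 V)) ∨ (i.val = t - 1 ∧ u = sMax (e : Sym2 V)) := by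
  rw [Subdiv, SimpleGraph.fromRel_adj]
  simp

lemma adj_inr_inr {e e' : G.edgeSet} {i j : Fin t} :
    (Subdiv G t).Adj (Sum.inr (e, i)) (Sum.inr (e', j)) ↔
      e = e' ∧ (j.val = i.val + 1 ∨ i.val = j.val + 1) := by
  rw [Subdiv, SimpleGraph.fromRel_adj]
  constructor
  · rintro ⟨hne, ⟨he, hij⟩ | ⟨he, hij⟩⟩
    · exact ⟨Subtype.ext he, Or.inl hij⟩
    · exact ⟨Subtype.ext he.symm, Or.inr hij⟩
  · rintro ⟨rfl, hij | hij⟩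
    · exact ⟨by simp [Prod.ext_iff]; omega, Or.inl ⟨rfl, hij⟩⟩
    · exact ⟨by simp [Prod.ext_iff]; omega, Or.inr ⟨rfl, hij⟩⟩

end Lemmas

section UpDown
variable {G : SimpleGraph V} {t : ℕ}

/-- the "downward" neighbor of `(e,i)` -/
def downV (e : G.edgeSet) (i : Fin t) : V ⊕ (G.edgeSet × Fin t) :=
  if i.val = 0 then Sum.inl (sMin (e : Sym2 V))
  else Sum.inr (e, ⟨i.val - 1, lt_of_le_of_lt (Nat.sub_le _ _) i.isLt⟩)

lemma step_up {e : G.edgeSet} {i : Fin t} {y} (h : (Subdiv G t).Adj (Sum.inr (e,i)) y)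
    (hy : y ≠ downV e i) :
    (i.val = t - 1 ∧ y = Sum.inl (sMax (e : Sym2 V))) ∨
    (∃ j : Fin t, j.val = i.val + 1 ∧ y = Sum.inr (e, j)) := by
  cases y with
  | inl u =>
    rcases adj_inl_inr.1 h.symm with ⟨h0, rfl⟩ | ⟨h1, rfl⟩
    · exact absurd (by simp [downV, h0]) hy
    · exact Or.inl ⟨h1, rfl⟩
  | inr q =>
    obtain ⟨e', j⟩ := q
    obtain ⟨rfl, hij | hij⟩ := adj_inr_inr.1 h
    · exact Or.inr ⟨j, hij, rfl⟩
    · exfalso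
      apply hy
      have h0 : ¬ i.val = 0 := by omega
      simp only [downV, if_neg h0]
      have : j = ⟨i.val - 1, lt_of_le_of_lt (Nat.sub_le _ _) i.isLt⟩ := Fin.ext (show j.val = i.val - 1 by omega)
      rw [this]

lemma walk_up : ∀ (j : ℕ) (e : G.edgeSet) (i : Fin t), i.val + j + 1 = t → ∀ {b : V}
    (p : (Subdiv G t).Walk (Sum.inr (e,i)) (Sum.inl b)),
    p.IsTrail → s(downV e i, Sum.inr (e,i)) ∉ p.edges →
    ∃ q : (Subdiv G t).Walk (Sum.inl (sMax (e : Sym2 V))) (Sum.inl b),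
      q.IsTrail ∧ p.length = (j+1) + q.length := by
  intro j
  induction j with
  | zero =>
    intro e i hij b p hp hd
    cases p with
    | cons h p' =>
      rename_i y
      have hy : y ≠ downV e i := by
        rintro rfl
        exact hd (by simp [Sym2.eq_swap])
      rcases step_up h hy with ⟨h1, rfl⟩ | ⟨j', hj', rfl⟩
      · exact ⟨p', hp.of_cons, by simp [SimpleGraph.Walk.length_cons, Nat.add_comm]⟩
      · exact absurd j'.isLt (by omega)
  | succ j ih =>
    intro e i hij b p hp hd
    cases p with
    | cons h p' =>
      rename_i y
      have hy : y ≠ downV e i := by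
        rintro rfl
        exact hd (by simp [Sym2.eq_swap])
      rcases step_up h hy with ⟨h1, rfl⟩ | ⟨j', hj', rfl⟩
      · omega
      · have hdj : downV e j' = Sum.inr (e, i) := by
          have h0 : ¬ j'.val = 0 := by omega
          simp only [downV, if_neg h0]
          have : i = ⟨j'.val - 1, lt_of_le_of_lt (Nat.sub_le _ _) j'.isLt⟩ := Fin.ext (show i.val = j'.val - 1 by omega)
          rw [this]
        have htr := (SimpleGraph.Walk.isTrail_cons h p').1 hp
        obtain ⟨q, hq, hlen⟩ := ih e j' (by omega) p' htr.1 (by rw [hdj]; exact htr.2)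
        exact ⟨q, hq, by simp [SimpleGraph.Walk.length_cons, hlen]; omega⟩

end UpDown

section Down
variable {G : SimpleGraph V} {t : ℕ}

/-- the "upward" neighbor of `(e,i)` -/
def upV (e : G.edgeSet) (i : Fin t) : V ⊕ (G.edgeSet × Fin t) :=
  if h : i.val = t - 1 then Sum.inl (sMax (e : Sym2 V))
  else Sum.inr (e, ⟨i.val + 1, by have := i.isLt; omega⟩)

lemma step_down {e : G.edgeSet} {i : Fin t} {y} (h : (Subdiv G t).Adj (Sum.inr (e,i)) y)
    (hy : y ≠ upV e i) :
    (i.val = 0 ∧ y = Sum.inl (sMin (e : Sym2 V))) ∨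
    (∃ j : Fin t, i.val = j.val + 1 ∧ y = Sum.inr (e, j)) := by
  cases y with
  | inl u =>
    rcases adj_inl_inr.1 h.symm with ⟨h0, rfl⟩ | ⟨h1, rfl⟩
    · exact Or.inl ⟨h0, rfl⟩
    · exact absurd (by simp [upV, h1]) hy
  | inr q =>
    obtain ⟨e', j⟩ := q
    obtain ⟨rfl, hij | hij⟩ := adj_inr_inr.1 h
    · exfalso
      apply hy
      have h1 : ¬ i.val = t - 1 := by have := j.isLt; omega
      simp only [upV, dif_neg h1]
      have : j = ⟨i.val + 1, by have := i.isLt; omega⟩ := Fin.ext (show j.val = i.val + 1 by omega)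
      rw [this]
    · exact Or.inr ⟨j, hij, rfl⟩

lemma walk_down : ∀ (j : ℕ) (e : G.edgeSet) (i : Fin t), i.val = j → ∀ {b : V}
    (p : (Subdiv G t).Walk (Sum.inr (e,i)) (Sum.inl b)),
    p.IsTrail → s(upV e i, Sum.inr (e,i)) ∉ p.edges →
    ∃ q : (Subdiv G t).Walk (Sum.inl (sMin (e : Sym2 V))) (Sum.inl b),
      q.IsTrail ∧ p.length = (j+1) + q.length := by
  intro j
  induction j with
  | zero =>
    intro e i hij b p hp hd
    cases p with
    | cons h p' =>
      rename_i y
      have hy : y ≠ upV e i := by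
        rintro rfl
        exact hd (by simp [Sym2.eq_swap])
      rcases step_down h hy with ⟨h1, rfl⟩ | ⟨j', hj', rfl⟩
      · exact ⟨p', hp.of_cons, by simp [SimpleGraph.Walk.length_cons, Nat.add_comm]⟩
      · omega
  | succ j ih =>
    intro e i hij b p hp hd
    cases p with
    | cons h p' =>
      rename_i y
      have hy : y ≠ upV e i := by
        rintro rfl
        exact hd (by simp [Sym2.eq_swap])
      rcases step_down h hy with ⟨h1, rfl⟩ | ⟨j', hj', rfl⟩
      · omega
      · have hdj : upV e j' = Sum.inr (e, i) := by
          have h1 : ¬ j'.val = t - 1 := by have := i.isLt; omega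
          simp only [upV, dif_neg h1]
          have : i = ⟨j'.val + 1, by have := j'.isLt; omega⟩ := Fin.ext (show i.val = j'.val + 1 by omega)
          rw [this]
        have htr := (SimpleGraph.Walk.isTrail_cons h p').1 hp
        obtain ⟨q, hq, hlen⟩ := ih e j' (by omega) p' htr.1 (by rw [hdj]; exact htr.2)
        exact ⟨q, hq, by simp [SimpleGraph.Walk.length_cons, hlen]; omega⟩

end Down

section Main
variable {G : SimpleGraph V} {t : ℕ}

lemma main_step {a b : V} (p : (Subdiv G t).Walk (Sum.inl a) (Sum.inl b))
    (hp : p.IsTrail) (hl : 0 < p.length) :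
    ∃ (c : V) (q : (Subdiv G t).Walk (Sum.inl c) (Sum.inl b)),
      G.Adj a c ∧ q.IsTrail ∧ p.length = (t+1) + q.length := by
  cases p with
  | nil => simp at hl
  | cons h p' =>
    rename_i y
    have htr := (SimpleGraph.Walk.isTrail_cons h p').1 hp
    cases y with
    | inl w =>
      obtain ⟨ht0, hadj⟩ := adj_inl_inl.1 h
      subst ht0
      exact ⟨w, p', hadj, htr.1, by simp [SimpleGraph.Walk.length_cons, Nat.add_comm]⟩
    | inr q0 =>
      obtain ⟨e, i⟩ := q0
      have ht1 : 1 ≤ t := by have := i.isLt; omega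
      rcases adj_inl_inr.1 h with ⟨h0, rfl⟩ | ⟨h1, rfl⟩
      · have hdV : downV e i = Sum.inl (sMin (e : Sym2 V)) := by simp [downV, h0]
        obtain ⟨q, hq, hlen⟩ := walk_up (t-1) e i (by omega) p' htr.1
          (by rw [hdV]; exact htr.2)
        exact ⟨sMax (e : Sym2 V), q, adj_sMin_sMax e, hq,
          by simp [SimpleGraph.Walk.length_cons, hlen]; omega⟩
      · have hdV : upV e i = Sum.inl (sMax (e : Sym2 V)) := by simp [upV, h1]
        obtain ⟨q, hq, hlen⟩ := walk_down i.val e i rfl p' htr.1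
          (by rw [hdV]; exact htr.2)
        exact ⟨sMin (e : Sym2 V), q, (adj_sMin_sMax e).symm, hq,
          by simp [SimpleGraph.Walk.length_cons, hlen]; omega⟩

end Main

section Backward
variable {G : SimpleGraph V} {t : ℕ}

open SimpleGraph Walk

lemma same_e : ∀ {x y} (p : (Subdiv G t).Walk x y),
    (∀ v ∈ p.support, ∀ u : V, v ≠ Sum.inl u) →
    ∀ (e : G.edgeSet) (i : Fin t), x = Sum.inr (e, i) →
    ∀ v ∈ p.support, ∃ j : Fin t, v = Sum.inr (e, j) := by
  intro x y p
  induction p with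
  | nil =>
    rintro hall e i rfl v hv
    simp only [support_nil, List.mem_singleton] at hv
    exact ⟨i, hv⟩
  | @cons x0 y0 z0 hadj p ih =>
    rintro hall e i rfl v hv
    rw [support_cons, List.mem_cons] at hv
    rcases hv with rfl | hv
    · exact ⟨i, rfl⟩
    · have hy' : y0 ∈ (Walk.cons hadj p).support := by
        rw [support_cons]; exact List.mem_cons_of_mem _ p.start_mem_support
      cases y0 with
      | inl u => exact absurd rfl (hall _ hy' u)
      | inr q0 =>
        obtain ⟨e', i'⟩ := q0
        obtain ⟨rfl, -⟩ := adj_inr_inr.1 hadj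
        exact ih (fun v hv u => hall v (by rw [support_cons]; exact List.mem_cons_of_mem _ hv) u)
          e i' rfl v hv

lemma backward_dir {x : V ⊕ (G.edgeSet × Fin t)} (w : (Subdiv G t).Walk x x)
    (hc : w.IsCycle) (hlen : w.length = 3 * (t+1)) :
    ∃ a b c : V, G.Adj a b ∧ G.Adj b c ∧ G.Adj c a := by
  rcases Classical.em (∃ u : V, Sum.inl u ∈ w.support) with hex | hex
  · obtain ⟨u, hu⟩ := hex
    set w' := w.rotate _ hu with hw'
    have hc' : w'.IsCycle := hc.rotate hu
    have hl' : w'.length = 3 * (t+1) := by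
      have h1 := congrArg Walk.length (w.take_spec hu)
      rw [length_append] at h1
      rw [hw', Walk.rotate, length_append]
      omega
    obtain ⟨c1, q1, ha1, hq1, hl1⟩ := main_step w' hc'.isCircuit.isTrail (by omega)
    obtain ⟨c2, q2, ha2, hq2, hl2⟩ := main_step q1 hq1 (by omega)
    obtain ⟨c3, q3, ha3, hq3, hl3⟩ := main_step q2 hq2 (by omega)
    have hq3len : q3.length = 0 := by omega
    have hcu : c3 = u := Sum.inl.inj (Walk.eq_of_length_eq_zero hq3len)
    exact ⟨u, c1, c2, ha1, ha2, hcu ▸ ha3⟩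
  · exfalso
    push_neg at hex
    have hall : ∀ v ∈ w.support, ∀ u : V, v ≠ Sum.inl u := by
      rintro v hv u rfl; exact hex u hv
    cases x with
    | inl u => exact hex u w.start_mem_support
    | inr q0 =>
      obtain ⟨e, i⟩ := q0
      have ht : 0 < t := i.pos
      have hse := same_e w hall e i rfl
      have hnd : w.support.tail.Nodup := hc.support_nodup
      have hlentail : w.support.tail.length = 3 * (t+1) := by
        have := w.length_support
        have : w.support.tail.length = w.length := by
          cases hs : w.support with
          | nil => exact absurd hs w.support_ne_nil
          | cons a l => simp [hs] at this ⊢; omega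
        omega
      set f : (V ⊕ (G.edgeSet × Fin t)) → Fin t :=
        Sum.elim (fun _ => (⟨0, ht⟩ : Fin t)) (fun p => p.2) with hf
      have hmapnd : (w.support.tail.map f).Nodup := by
        refine hnd.map_on ?_
        intro v1 hv1 v2 hv2 hfe
        obtain ⟨j1, rfl⟩ := hse v1 (List.mem_of_mem_tail hv1)
        obtain ⟨j2, rfl⟩ := hse v2 (List.mem_of_mem_tail hv2)
        simp only [hf, Sum.elim_inr] at hfe
        rw [hfe]
      have hle := hmapnd.length_le_card
      rw [List.length_map, hlentail, Fintype.card_fin] at hle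
      omega

end Backward

section Forward
variable {G : SimpleGraph V} {t : ℕ}

open SimpleGraph Walk

/-- the ascending path through the interior of `e`, from `(e,i)` to `sMax e`. -/
def segUp (e : G.edgeSet) : (j : ℕ) → (i : Fin t) → i.val + j + 1 = t →
    (Subdiv G t).Walk (Sum.inr (e, i)) (Sum.inl (sMax (e : Sym2 V)))
  | 0, i, h =>
      Walk.cons ((adj_inl_inr (t := t)).2 (Or.inr ⟨by omega, rfl⟩)).symm Walk.nil
  | j+1, i, h =>
      Walk.cons
        (show (Subdiv G t).Adj (Sum.inr (e, i))
            (Sum.inr (e, ⟨i.val + 1, by omega⟩)) from adj_inr_inr.2 ⟨rfl, Or.inl rfl⟩)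
        (segUp e j ⟨i.val + 1, by omega⟩ (show i.val + 1 + j + 1 = t by omega))

lemma segUp_length (e : G.edgeSet) (j : ℕ) : ∀ (i : Fin t) (h : i.val + j + 1 = t),
    (segUp e j i h).length = j + 1 := by
  induction j with
  | zero => intro i h; simp [segUp]
  | succ j ih => intro i h; simp [segUp, ih]

lemma segUp_support (e : G.edgeSet) (j : ℕ) : ∀ (i : Fin t) (h : i.val + j + 1 = t),
    ∀ v ∈ (segUp e j i h).support,
    (∃ m : Fin t, i.val ≤ m.val ∧ v = Sum.inr (e, m)) ∨ v = Sum.inl (sMax (e : Sym2 V)) := by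
  induction j with
  | zero =>
    intro i h v hv
    simp only [segUp, support_cons, support_nil, List.mem_cons, List.mem_singleton] at hv
    rcases hv with rfl | rfl | h'
    · exact Or.inl ⟨i, le_refl _, rfl⟩
    · exact Or.inr rfl
    · exact absurd h' (by simp)
  | succ j ih =>
    intro i h v hv
    simp only [segUp, support_cons, List.mem_cons] at hv
    rcases hv with rfl | hv
    · exact Or.inl ⟨i, le_refl _, rfl⟩
    · rcases ih _ _ v hv with ⟨m, hm, rfl⟩ | rfl
      · exact Or.inl ⟨m, le_trans (Nat.le_succ _) hm, rfl⟩
      · exact Or.inr rfl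

lemma segUp_isPath (e : G.edgeSet) (j : ℕ) : ∀ (i : Fin t) (h : i.val + j + 1 = t),
    (segUp e j i h).IsPath := by
  induction j with
  | zero =>
    intro i h
    apply Walk.IsPath.mk'
    simp [segUp]
  | succ j ih =>
    intro i h
    have : segUp e (j+1) i h = Walk.cons _ (segUp e j ⟨i.val + 1, by omega⟩
        (show i.val + 1 + j + 1 = t by omega)) := rfl
    rw [this, Walk.cons_isPath_iff]
    refine ⟨ih _ _, fun hmem => ?_⟩
    rcases segUp_support e j _ _ _ hmem with ⟨m, hm, hEq⟩ | hEq
    · have h1 : i = m := by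
        have := Sum.inr.inj hEq
        exact (Prod.mk.injEq _ _ _ _ ▸ this).2
      exact absurd (show i.val + 1 ≤ i.val from h1 ▸ hm) (by omega)
    · exact absurd hEq (by simp)

lemma segUp_edges (e : G.edgeSet) (j : ℕ) : ∀ (i : Fin t) (h : i.val + j + 1 = t),
    ∀ ed ∈ (segUp e j i h).edges, ∃ m : Fin t, ∃ x, ed = s(Sum.inr (e, m), x) := by
  induction j with
  | zero =>
    intro i h ed hed
    simp only [segUp, edges_cons, edges_nil, List.mem_cons, List.not_mem_nil] at hed
    rcases hed with rfl | h'
    · exact ⟨i, _, rfl⟩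
    · exact absurd h' (by simp)
  | succ j ih =>
    intro i h ed hed
    simp only [segUp, edges_cons, List.mem_cons] at hed
    rcases hed with rfl | hed
    · exact ⟨i, _, rfl⟩
    · exact ih _ _ ed hed

/-- the subdivided-edge path from `sMin e` to `sMax e`, of length `t + 1`. -/
def minWalk (e : G.edgeSet) :
    (Subdiv G t).Walk (Sum.inl (sMin (e : Sym2 V))) (Sum.inl (sMax (e : Sym2 V))) :=
  if h : t = 0 then Walk.cons (adj_inl_inl.2 ⟨h, adj_sMin_sMax e⟩) Walk.nil
  else Walk.cons
    (show (Subdiv G t).Adj (Sum.inl (sMin (e : Sym2 V))) (Sum.inr (e, ⟨0, by omega⟩)) from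
      adj_inl_inr.2 (Or.inl ⟨rfl, rfl⟩))
    (segUp e (t-1) ⟨0, by omega⟩ (show 0 + (t-1) + 1 = t by omega))

lemma minWalk_length (e : G.edgeSet) : (minWalk (t := t) e).length = t + 1 := by
  rw [minWalk]
  split_ifs with h0
  · simp [h0]
  · simp [segUp_length]
    omega

lemma minWalk_isPath (e : G.edgeSet) : (minWalk (t := t) e).IsPath := by
  rw [minWalk]
  split_ifs with h0
  · apply Walk.IsPath.mk'
    simp [(adj_sMin_sMax e).ne]
  · rw [Walk.cons_isPath_iff]
    refine ⟨segUp_isPath _ _ _ _, fun hmem => ?_⟩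
    rcases segUp_support e _ _ _ _ hmem with ⟨m, hm, hEq⟩ | hEq
    · exact absurd hEq (by simp)
    · exact absurd (Sum.inl.inj hEq) (adj_sMin_sMax e).ne

lemma minWalk_support (e : G.edgeSet) :
    ∀ v ∈ (minWalk (t := t) e).support,
      v = Sum.inl (sMin (e : Sym2 V)) ∨ v = Sum.inl (sMax (e : Sym2 V)) ∨
        ∃ m : Fin t, v = Sum.inr (e, m) := by
  rw [minWalk]
  split_ifs with h0
  · intro v hv
    simp only [support_cons, support_nil, List.mem_cons, List.mem_singleton] at hv
    rcases hv with rfl | rfl | h'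
    · exact Or.inl rfl
    · exact Or.inr (Or.inl rfl)
    · exact absurd h' (by simp)
  · intro v hv
    simp only [support_cons, List.mem_cons] at hv
    rcases hv with rfl | hv
    · exact Or.inl rfl
    · rcases segUp_support e _ _ _ _ hv with ⟨m, _, rfl⟩ | rfl
      · exact Or.inr (Or.inr ⟨m, rfl⟩)
      · exact Or.inr (Or.inl rfl)

lemma minWalk_edges (e : G.edgeSet) :
    ∀ ed ∈ (minWalk (t := t) e).edges,
      (∃ m : Fin t, ∃ x, ed = s(Sum.inr (e, m), x)) ∨
        ed = s(Sum.inl (sMin (e : Sym2 V)), Sum.inl (sMax (e : Sym2 V))) := by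
  rw [minWalk]
  split_ifs with h0
  · intro ed hed
    simp only [edges_cons, edges_nil, List.mem_cons, List.not_mem_nil] at hed
    rcases hed with rfl | h'
    · exact Or.inr rfl
    · exact absurd h' (by simp)
  · intro ed hed
    simp only [edges_cons, List.mem_cons] at hed
    rcases hed with rfl | hed
    · exact Or.inl ⟨⟨0, by omega⟩, _, Sym2.eq_swap⟩
    · rcases segUp_edges e _ _ _ ed hed with ⟨m, x, rfl⟩
      exact Or.inl ⟨m, x, rfl⟩

end Forward

section Assemble
variable {G : SimpleGraph V} {t : ℕ}

open SimpleGraph Walk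

lemma edgeWalk {a b : V} (hab : G.Adj a b) :
    ∃ p : (Subdiv G t).Walk (Sum.inl a) (Sum.inl b),
      p.IsPath ∧ p.length = t + 1 ∧
      (∀ v ∈ p.support, v = Sum.inl a ∨ v = Sum.inl b ∨
        ∃ m : Fin t, v = Sum.inr ((⟨s(a,b), hab⟩ : G.edgeSet), m)) ∧
      (∀ ed ∈ p.edges,
        (∃ m : Fin t, ∃ x, ed = s(Sum.inr ((⟨s(a,b), hab⟩ : G.edgeSet), m), x)) ∨
        ed = s(Sum.inl a, Sum.inl b)) := by
  set E : G.edgeSet := ⟨s(a,b), hab⟩ with hE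
  rcases hab.ne.lt_or_gt with h | h
  · have hmin : sMin (E : Sym2 V) = a := min_eq_left h.le
    have hmax : sMax (E : Sym2 V) = b := max_eq_right h.le
    refine ⟨(minWalk E).copy (congrArg Sum.inl hmin) (congrArg Sum.inl hmax),
      ?_, ?_, ?_, ?_⟩
    · rw [Walk.isPath_copy]; exact minWalk_isPath E
    · rw [Walk.length_copy]; exact minWalk_length E
    · intro v hv
      rw [Walk.support_copy] at hv
      rcases minWalk_support E v hv with h' | h' | ⟨m, h'⟩
      · exact Or.inl (by rw [h', hmin])
      · exact Or.inr (Or.inl (by rw [h', hmax]))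
      · exact Or.inr (Or.inr ⟨m, h'⟩)
    · intro ed hed
      rw [Walk.edges_copy] at hed
      rcases minWalk_edges E ed hed with ⟨m, x, h'⟩ | h'
      · exact Or.inl ⟨m, x, h'⟩
      · exact Or.inr (by rw [h', hmin, hmax])
  · have hmin : sMin (E : Sym2 V) = b := min_eq_right h.le
    have hmax : sMax (E : Sym2 V) = a := max_eq_left h.le
    refine ⟨((minWalk E).reverse).copy (congrArg Sum.inl hmax) (congrArg Sum.inl hmin),
      ?_, ?_, ?_, ?_⟩
    · rw [Walk.isPath_copy]; exact (minWalk_isPath E).reverse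
    · rw [Walk.length_copy, Walk.length_reverse]; exact minWalk_length E
    · intro v hv
      rw [Walk.support_copy, Walk.support_reverse, List.mem_reverse] at hv
      rcases minWalk_support E v hv with h' | h' | ⟨m, h'⟩
      · exact Or.inr (Or.inl (by rw [h', hmin]))
      · exact Or.inl (by rw [h', hmax])
      · exact Or.inr (Or.inr ⟨m, h'⟩)
    · intro ed hed
      rw [Walk.edges_copy, Walk.edges_reverse, List.mem_reverse] at hed
      rcases minWalk_edges E ed hed with ⟨m, x, h'⟩ | h'
      · exact Or.inl ⟨m, x, h'⟩
      · exact Or.inr (by rw [h', hmin, hmax, Sym2.eq_swap])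

lemma tail_nodup {u v : V ⊕ (G.edgeSet × Fin t)} {p : (Subdiv G t).Walk u v}
    (hp : p.IsPath) : p.support.tail.Nodup := by
  have h := hp.support_nodup
  rw [p.support_eq_cons] at h
  exact (List.nodup_cons.1 h).2

lemma tail_char {a b : V} {E : G.edgeSet} {p : (Subdiv G t).Walk (Sum.inl a) (Sum.inl b)}
    (hp : p.IsPath)
    (hs : ∀ v ∈ p.support, v = Sum.inl a ∨ v = Sum.inl b ∨ ∃ m : Fin t, v = Sum.inr (E, m)) :
    ∀ v ∈ p.support.tail, v = Sum.inl b ∨ ∃ m : Fin t, v = Sum.inr (E, m) := by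
  intro v hv
  rcases hs v (List.mem_of_mem_tail hv) with rfl | h | h
  · exfalso
    have h := hp.support_nodup
    rw [p.support_eq_cons] at h
    exact (List.nodup_cons.1 h).1 hv
  · exact Or.inl h
  · exact Or.inr h

lemma tail_disj {b1 b2 : V} {E1 E2 : G.edgeSet} (hbb : b1 ≠ b2) (hEE : E1 ≠ E2)
    {l1 l2 : List (V ⊕ (G.edgeSet × Fin t))}
    (H1 : ∀ v ∈ l1, v = Sum.inl b1 ∨ ∃ m : Fin t, v = Sum.inr (E1, m))
    (H2 : ∀ v ∈ l2, v = Sum.inl b2 ∨ ∃ m : Fin t, v = Sum.inr (E2, m)) :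
    l1.Disjoint l2 := by
  intro v h1 h2
  rcases H1 v h1 with rfl | ⟨m, rfl⟩ <;> rcases H2 _ h2 with h | ⟨m', h⟩
  · exact hbb (Sum.inl.inj h)
  · simp at h
  · simp at h
  · exact hEE (congrArg Prod.fst (Sum.inr.inj h))

lemma edges_disj {a1 b1 a2 b2 : V} (h1 : G.Adj a1 b1) (h2 : G.Adj a2 b2)
    (hne : s(a1,b1) ≠ s(a2,b2)) {u1 v1 u2 v2 : V ⊕ (G.edgeSet × Fin t)}
    {p : (Subdiv G t).Walk u1 v1} {q : (Subdiv G t).Walk u2 v2}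
    (H1 : ∀ ed ∈ p.edges,
      (∃ m : Fin t, ∃ x, ed = s(Sum.inr ((⟨s(a1,b1), h1⟩ : G.edgeSet), m), x)) ∨
      ed = s(Sum.inl a1, Sum.inl b1))
    (H2 : ∀ ed ∈ q.edges,
      (∃ m : Fin t, ∃ x, ed = s(Sum.inr ((⟨s(a2,b2), h2⟩ : G.edgeSet), m), x)) ∨
      ed = s(Sum.inl a2, Sum.inl b2)) :
    p.edges.Disjoint q.edges := by
  intro ed hp hq
  rcases H1 ed hp with ⟨m, x, rfl⟩ | rfl
  · rcases H2 _ hq with ⟨m', x', hEq⟩ | hEq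
    · rw [Sym2.eq_iff] at hEq
      rcases hEq with ⟨hEq1, -⟩ | ⟨hEq1, hEq2⟩
      · exact hne (congrArg Subtype.val (congrArg Prod.fst (Sum.inr.inj hEq1)))
      · have hadj := p.adj_of_mem_edges hp
        rw [hEq2] at hadj
        obtain ⟨hE, -⟩ := adj_inr_inr.1 hadj
        exact hne (congrArg Subtype.val hE)
    · rw [Sym2.eq_iff] at hEq
      rcases hEq with ⟨h', -⟩ | ⟨h', -⟩ <;> simp at h'
  · rcases H2 _ hq with ⟨m', x', hEq⟩ | hEq
    · rw [Sym2.eq_iff] at hEq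
      rcases hEq with ⟨h', -⟩ | ⟨-, h'⟩ <;> simp at h'
    · rw [Sym2.eq_iff] at hEq
      rcases hEq with ⟨ha, hb⟩ | ⟨ha, hb⟩
      · exact hne (by rw [Sum.inl.inj ha, Sum.inl.inj hb])
      · exact hne (by rw [Sum.inl.inj ha, Sum.inl.inj hb, Sym2.eq_swap])

lemma forward_dir {a b c : V} (hab : G.Adj a b) (hbc : G.Adj b c) (hca : G.Adj c a) :
    ∃ (x : V ⊕ (G.edgeSet × Fin t)) (w : (Subdiv G t).Walk x x),
      w.IsCycle ∧ w.length = 3 * (t + 1) := by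
  obtain ⟨p1, hP1, hL1, hS1, hE1⟩ := edgeWalk (t := t) hab
  obtain ⟨p2, hP2, hL2, hS2, hE2⟩ := edgeWalk (t := t) hbc
  obtain ⟨p3, hP3, hL3, hS3, hE3⟩ := edgeWalk (t := t) hca
  have hne12 : s(a,b) ≠ s(b,c) := by
    intro h; rcases Sym2.eq_iff.1 h with ⟨h1, h2⟩ | ⟨h1, h2⟩
    · exact hab.ne h1
    · exact hca.ne h1.symm
  have hne23 : s(b,c) ≠ s(c,a) := by
    intro h; rcases Sym2.eq_iff.1 h with ⟨h1, h2⟩ | ⟨h1, h2⟩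
    · exact hbc.ne h1
    · exact hab.ne h1.symm
  have hne13 : s(a,b) ≠ s(c,a) := by
    intro h; rcases Sym2.eq_iff.1 h with ⟨h1, h2⟩ | ⟨h1, h2⟩
    · exact hca.ne h1.symm
    · exact hbc.ne h2
  set W := p1.append (p2.append p3) with hW
  have hWlen : W.length = 3 * (t+1) := by
    rw [hW, Walk.length_append, Walk.length_append, hL1, hL2, hL3]; ring
  refine ⟨Sum.inl a, W, ⟨⟨⟨?_⟩, ?_⟩, ?_⟩, hWlen⟩
  · rw [hW, Walk.edges_append, Walk.edges_append, List.nodup_append']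
    refine ⟨hP1.isTrail.edges_nodup, ?_, ?_⟩
    · rw [List.nodup_append']
      exact ⟨hP2.isTrail.edges_nodup, hP3.isTrail.edges_nodup, edges_disj hbc hca hne23 hE2 hE3⟩
    · rw [List.disjoint_append_right]
      exact ⟨edges_disj hab hbc hne12 hE1 hE2, edges_disj hab hca hne13 hE1 hE3⟩
  · intro h
    have h' := congrArg Walk.length h
    rw [hWlen] at h'
    simp at h'
  · rw [hW, Walk.tail_support_append, Walk.tail_support_append, List.nodup_append']
    have T1 := tail_char hP1 hS1
    have T2 := tail_char hP2 hS2
    have T3 := tail_char hP3 hS3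
    have hEE12 : (⟨s(a,b), hab⟩ : G.edgeSet) ≠ ⟨s(b,c), hbc⟩ := fun h => hne12 (congrArg Subtype.val h)
    have hEE23 : (⟨s(b,c), hbc⟩ : G.edgeSet) ≠ ⟨s(c,a), hca⟩ := fun h => hne23 (congrArg Subtype.val h)
    have hEE13 : (⟨s(a,b), hab⟩ : G.edgeSet) ≠ ⟨s(c,a), hca⟩ := fun h => hne13 (congrArg Subtype.val h)
    refine ⟨tail_nodup hP1, ?_, ?_⟩
    · rw [List.nodup_append']
      exact ⟨tail_nodup hP2, tail_nodup hP3, tail_disj hca.ne hEE23 T2 T3⟩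
    · rw [List.disjoint_append_right]
      exact ⟨tail_disj hbc.ne hEE12 T1 T2, tail_disj hab.ne' hEE13 T1 T3⟩

end Assemble


/-- for `k = 3(t+1) ≥ 3`, `G` contains a triangle iff the `t`-fold
subdivision `G_t` contains a cycle of length `k`. -/
theorem stmt3 (G : SimpleGraph V) (k t : ℕ) (hk : 3 ≤ k) (hkt : k = 3 * (t + 1)) :
    (∃ a b c : V, G.Adj a b ∧ G.Adj b c ∧ G.Adj c a) ↔
    (∃ (x : V ⊕ (G.edgeSet × Fin t)) (w : (Subdiv G t).Walk x x),
      w.IsCycle ∧ w.length = k) := by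

  subst hkt
  constructor
  · rintro ⟨a, b, c, hab, hbc, hca⟩
    exact forward_dir hab hbc hca
  · rintro ⟨x, w, hc, hlen⟩
    exact backward_dir w hc hlen
end

section
/- Let H⃗ be a directed graph with hubset S, let S_p ⊊ S, and let T be a partial hub-tree decomposition of S_p of width one. Let s ∈ S \ S_p and suppose d ∈ S_p is an S_p-cover of s, i.e., for every s₂ ∈ S_p, Reach(s) ∩ Reach(s₂) ⊆ Reach(d). Then attaching s as a leaf to the node containing d yields a partial hub-tree decomposition of S_p ∪ {s} of width one. -/
variable {V : Type*}

/-- The set of vertices reachable from `v` by a directed path. -/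
def Reach (D : V → V → Prop) (v : V) : Set V := {w | Relation.ReflTransGen D v w}

/-- `S` is a hubset of the directed graph `D`. -/
def IsHubset (D : V → V → Prop) (S : Set V) : Prop :=
  (∀ s ∈ S, ∀ s' ∈ S, s ≠ s' → ¬ Relation.TransGen D s s') ∧
  (∀ v, v ∉ S → ∃ s ∈ S, v ∈ Reach D s)

/-- A width-one partial hub-tree decomposition of the set `Sp` of hub vertices:
a tree on `Sp` (all bags are singletons, identified with their vertex) such that
whenever `b` lies on the (unique) path between `b₁` and `b₂`,
`Reach(b₁) ∩ Reach(b₂) ⊆ Reach(b)`. -/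
def IsWidthOneDecomp (D : V → V → Prop) (Sp : Set V) (T : SimpleGraph Sp) : Prop :=
  T.IsTree ∧
  ∀ (b b₁ b₂ : Sp) (p : T.Walk b₁ b₂), p.IsPath → b ∈ p.support →
    Reach D (b₁ : V) ∩ Reach D (b₂ : V) ⊆ Reach D (b : V)

section Aux

open SimpleGraph

variable {Sp : Set V} {T : SimpleGraph Sp} {s : V} {d : Sp}

/-- The graph obtained by attaching `s` as a leaf at `d`. -/
def attachLeaf (T : SimpleGraph Sp) (s : V) (d : Sp) : SimpleGraph ↥(Sp ∪ {s}) :=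
  SimpleGraph.fromRel fun a b : ↥(Sp ∪ {s}) =>
    (∃ (ha : (a : V) ∈ Sp) (hb : (b : V) ∈ Sp), T.Adj ⟨a, ha⟩ ⟨b, hb⟩) ∨
    ((a : V) = s ∧ (b : V) = (d : V))

/-- The vertex `s` inside `Sp ∪ {s}`. -/
def sVert (Sp : Set V) (s : V) : ↥(Sp ∪ {s}) := ⟨s, Or.inr rfl⟩

/-- The inclusion homomorphism from `T` into `attachLeaf T s d`. -/
def attachHom (T : SimpleGraph Sp) (s : V) (d : Sp) : T →g attachLeaf T s d where
  toFun x := ⟨x.1, Or.inl x.2⟩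
  map_rel' := by
    intro x y h
    rw [attachLeaf, SimpleGraph.fromRel_adj]
    refine ⟨fun he => h.ne (Subtype.ext (Subtype.mk_eq_mk.mp he)), Or.inl (Or.inl ⟨x.2, y.2, h⟩)⟩

lemma attachHom_injective : Function.Injective (attachHom T s d) :=
  fun _ _ h => Subtype.ext (Subtype.mk_eq_mk.mp h)

lemma adj_sVert (hsSp : s ∉ Sp) {b : ↥(Sp ∪ {s})}
    (h : (attachLeaf T s d).Adj (sVert Sp s) b) : b = attachHom T s d d := by
  rw [attachLeaf, SimpleGraph.fromRel_adj] at h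
  obtain ⟨hne, h | h⟩ := h
  · rcases h with ⟨ha, _, _⟩ | ⟨_, hb⟩
    · exact absurd ha hsSp
    · exact Subtype.ext hb
  · rcases h with ⟨_, ha, _⟩ | ⟨hb, _⟩
    · exact absurd ha hsSp
    · exact absurd (Subtype.ext hb).symm hne

/-- A walk avoiding `s` between vertices of `Sp` lifts to `T`. -/
lemma walk_lift (hsSp : s ∉ Sp) :
    ∀ {x y : ↥(Sp ∪ {s})} (p : (attachLeaf T s d).Walk x y),
      sVert Sp s ∉ p.support → ∀ (hx : (x : V) ∈ Sp) (hy : (y : V) ∈ Sp),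
      ∃ q : T.Walk ⟨x.1, hx⟩ ⟨y.1, hy⟩, p = q.map (attachHom T s d) := by
  intro x y p
  induction p with
  | nil =>
    intro _ hx hy
    exact ⟨SimpleGraph.Walk.nil, rfl⟩
  | @cons x z y h p ih =>
    intro hns hx hy
    rw [SimpleGraph.Walk.support_cons, List.mem_cons] at hns
    push_neg at hns
    have hzs : z ≠ sVert Sp s := by
      intro he; exact hns.2 (he ▸ p.start_mem_support)
    have hz : (z : V) ∈ Sp := by
      rcases z.2 with hz | hz
      · exact hz
      · exact absurd (Subtype.ext (show z.1 = s from hz)) hzs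
    obtain ⟨q, rfl⟩ := ih hns.2 hz hy
    have hadj : T.Adj ⟨x.1, hx⟩ ⟨z.1, hz⟩ := by
      rw [attachLeaf, SimpleGraph.fromRel_adj] at h
      obtain ⟨hne, h | h⟩ := h
      · rcases h with ⟨ha, hb, hadj⟩ | ⟨ha, _⟩
        · exact hadj
        · exact absurd (ha ▸ hx) hsSp
      · rcases h with ⟨hb, ha, hadj⟩ | ⟨hb, _⟩
        · exact hadj.symm
        · exact absurd (hb ▸ hz) hsSp
    exact ⟨SimpleGraph.Walk.cons hadj q, rfl⟩

/-- `s` can only appear at the ends of a path. -/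
lemma sVert_endpoint (hsSp : s ∉ Sp) :
    ∀ {x y : ↥(Sp ∪ {s})} (p : (attachLeaf T s d).Walk x y),
      p.IsPath → sVert Sp s ∈ p.support → sVert Sp s = x ∨ sVert Sp s = y := by
  intro x y p
  induction p with
  | nil =>
    intro _ hmem
    rw [SimpleGraph.Walk.support_nil, List.mem_singleton] at hmem
    exact Or.inl hmem
  | @cons x z y h p ih =>
    intro hp hmem
    rw [SimpleGraph.Walk.cons_isPath_iff] at hp
    rw [SimpleGraph.Walk.support_cons, List.mem_cons] at hmem
    rcases hmem with hmem | hmem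
    · exact Or.inl hmem
    rcases ih hp.1 hmem with hz | hy
    · -- s = z : the edge h goes into s, so x = d; the next edge also leaves to d.
      subst hz
      have hx : x = attachHom T s d d := adj_sVert hsSp h.symm
      clear ih
      cases p with
      | nil => exact Or.inr rfl
      | cons h₂ p₂ =>
        exfalso
        have hw := adj_sVert hsSp h₂
        apply hp.2
        rw [hx, ← hw, SimpleGraph.Walk.support_cons]
        exact List.mem_cons_of_mem _ p₂.start_mem_support
    · exact Or.inr hy

lemma path_unique (hsSp : s ∉ Sp) (hTac : T.IsAcyclic) :
    ∀ {x y : ↥(Sp ∪ {s})} (p q : (attachLeaf T s d).Walk x y), p.IsPath → q.IsPath → p = q := by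
  have Tuniq : ∀ {a b : Sp} (p q : T.Walk a b), p.IsPath → q.IsPath → p = q := by
    intro a b p q hp hq
    exact congrArg Subtype.val (hTac.path_unique ⟨p, hp⟩ ⟨q, hq⟩)
  have uniqN : ∀ {x y : ↥(Sp ∪ {s})} (p q : (attachLeaf T s d).Walk x y), p.IsPath → q.IsPath →
      sVert Sp s ∉ p.support → sVert Sp s ∉ q.support → p = q := by
    intro x y p q hp hq hps hqs
    have hx : (x : V) ∈ Sp := by
      rcases x.2 with hx | hx
      · exact hx
      · exfalso; apply hps
        have h : sVert Sp s = x := (Subtype.ext (show x.1 = s from hx)).symm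
        rw [h]; exact p.start_mem_support
    have hy : (y : V) ∈ Sp := by
      rcases y.2 with hy | hy
      · exact hy
      · exfalso; apply hps
        have h : sVert Sp s = y := (Subtype.ext (show y.1 = s from hy)).symm
        rw [h]; exact p.end_mem_support
    obtain ⟨qp, rfl⟩ := walk_lift hsSp p hps hx hy
    obtain ⟨qq, rfl⟩ := walk_lift hsSp q hqs hx hy
    rw [Tuniq qp qq hp.of_map hq.of_map]
  have uniqS : ∀ {y : ↥(Sp ∪ {s})} (p q : (attachLeaf T s d).Walk (sVert Sp s) y),
      y ≠ sVert Sp s → p.IsPath → q.IsPath → p = q := by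
    intro y p q hy hp hq
    cases p with
    | nil => exact absurd rfl hy
    | cons h p' =>
      cases q with
      | nil => exact absurd rfl hy
      | cons h₂ q' =>
        have hz1 := adj_sVert hsSp h
        have hz2 := adj_sVert hsSp h₂
        subst hz1
        subst hz2
        rw [SimpleGraph.Walk.cons_isPath_iff] at hp hq
        rw [uniqN p' q' hp.1 hq.1 hp.2 hq.2]
  intro x y p q hp hq
  by_cases hx : x = sVert Sp s
  · subst hx
    by_cases hy : y = sVert Sp s
    · subst hy
      rw [(SimpleGraph.Walk.isPath_iff_eq_nil (p := p)).mp hp,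
        (SimpleGraph.Walk.isPath_iff_eq_nil (p := q)).mp hq]
    · exact uniqS p q hy hp hq
  · by_cases hy : y = sVert Sp s
    · subst hy
      have hrev := uniqS p.reverse q.reverse hx hp.reverse hq.reverse
      have := congrArg SimpleGraph.Walk.reverse hrev
      rwa [SimpleGraph.Walk.reverse_reverse, SimpleGraph.Walk.reverse_reverse] at this
    · have hps : sVert Sp s ∉ p.support := by
        intro hm
        rcases sVert_endpoint hsSp p hp hm with h | h
        exacts [hx h.symm, hy h.symm]
      have hqs : sVert Sp s ∉ q.support := by
        intro hm
        rcases sVert_endpoint hsSp q hq hm with h | h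
        exacts [hx h.symm, hy h.symm]
      exact uniqN p q hp hq hps hqs

lemma attach_isTree (hsSp : s ∉ Sp) (hTree : T.IsTree) : (attachLeaf T s d).IsTree := by
  obtain ⟨hconn, hac⟩ := hTree
  constructor
  · rw [SimpleGraph.connected_iff]
    have hreach : ∀ x : ↥(Sp ∪ {s}),
        (attachLeaf T s d).Reachable x (attachHom T s d d) := by
      intro x
      rcases x.2 with hx | hx
      · obtain ⟨w⟩ := hconn.preconnected ⟨x.1, hx⟩ d
        exact ⟨w.map (attachHom T s d)⟩
      · have hxs : x = sVert Sp s := Subtype.ext hx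
        subst hxs
        refine SimpleGraph.Adj.reachable ?_
        simp only [attachLeaf, SimpleGraph.fromRel_adj]
        exact ⟨fun he => hsSp (by rw [Subtype.mk_eq_mk.mp he]; exact d.2),
          Or.inl (Or.inr ⟨rfl, rfl⟩)⟩
    exact ⟨fun u v => (hreach u).trans (hreach v).symm, ⟨sVert Sp s⟩⟩
  · exact SimpleGraph.isAcyclic_of_path_unique fun v w p q =>
      Subtype.ext (path_unique hsSp hac p.1 q.1 p.2 q.2)

end Aux

/-- attaching `s ∈ S \ Sp` as a leaf to a node `d` of a width-one partial
hub-tree decomposition of `Sp ⊊ S`, where `d` is an `Sp`-cover of `s`, yields a width-one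
partial hub-tree decomposition of `Sp ∪ {s}`. -/
theorem stmt12 (D : V → V → Prop) (S Sp : Set V) (hS : IsHubset D S) (hsub : Sp ⊂ S)
    (T : SimpleGraph Sp) (hT : IsWidthOneDecomp D Sp T)
    (s : V) (hs : s ∈ S \ Sp) (d : Sp)
    (hcover : ∀ s₂ ∈ Sp, Reach D s ∩ Reach D s₂ ⊆ Reach D (d : V)) :
    IsWidthOneDecomp D (Sp ∪ {s})
      (SimpleGraph.fromRel fun a b : ↥(Sp ∪ {s}) =>
        (∃ (ha : (a : V) ∈ Sp) (hb : (b : V) ∈ Sp), T.Adj ⟨a, ha⟩ ⟨b, hb⟩) ∨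
        ((a : V) = s ∧ (b : V) = (d : V))) := by
  obtain ⟨hsS, hsSp⟩ := hs
  obtain ⟨hTree, hsep⟩ := hT
  show IsWidthOneDecomp D (Sp ∪ {s}) (attachLeaf T s d)
  constructor
  · exact attach_isTree hsSp hTree
  · intro b b₁ b₂ p hp hb
    by_cases hbb₁ : b = b₁
    · subst hbb₁; exact Set.inter_subset_left
    by_cases hbb₂ : b = b₂
    · subst hbb₂; exact Set.inter_subset_right
    have hbs : b ≠ sVert Sp s := by
      intro he
      subst he
      rcases sVert_endpoint hsSp p hp hb with h | h
      exacts [hbb₁ h, hbb₂ h]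
    have hbSp : (b : V) ∈ Sp := by
      rcases b.2 with h | h
      · exact h
      · exact absurd (Subtype.ext (show b.1 = s from h)) hbs
    have key : ∀ (x y : ↥(Sp ∪ {s})) (hxSp : (x : V) ∈ Sp) (hySp : (y : V) ∈ Sp)
        (p' : (attachLeaf T s d).Walk x y), p'.IsPath → sVert Sp s ∉ p'.support →
        b ∈ p'.support → Reach D (x : V) ∩ Reach D (y : V) ⊆ Reach D (b : V) := by
      intro x y hxSp hySp p' hp' hns hbmem
      obtain ⟨q, rfl⟩ := walk_lift hsSp p' hns hxSp hySp
      change b ∈ (q.map (attachHom T s d)).support at hbmem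
      rw [SimpleGraph.Walk.support_map, List.mem_map] at hbmem
      obtain ⟨b', hb'q, hb'e⟩ := hbmem
      have he : (b' : V) = (b : V) := congrArg Subtype.val hb'e
      have hres := hsep b' ⟨x.1, hxSp⟩ ⟨y.1, hySp⟩ q hp'.of_map hb'q
      rw [he] at hres
      exact hres
    have keyS : ∀ (y : ↥(Sp ∪ {s})), y ≠ sVert Sp s →
        ∀ (p' : (attachLeaf T s d).Walk (sVert Sp s) y), p'.IsPath → b ∈ p'.support →
        Reach D s ∩ Reach D (y : V) ⊆ Reach D (b : V) := by
      intro y hy p' hp' hbmem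
      cases p' with
      | nil => exact absurd rfl hy
      | cons h pp =>
        have hySp : (y : V) ∈ Sp := by
          rcases y.2 with hh | hh
          · exact hh
          · exact absurd (Subtype.ext (show y.1 = s from hh)) hy
        have hz := adj_sVert hsSp h
        subst hz
        rw [SimpleGraph.Walk.cons_isPath_iff] at hp'
        rw [SimpleGraph.Walk.support_cons, List.mem_cons] at hbmem
        have hbp' : b ∈ pp.support := hbmem.resolve_left hbs
        have hkey := key _ _ d.2 hySp pp hp'.1 hp'.2 hbp'
        intro v hv
        exact hkey ⟨hcover _ hySp ⟨hv.1, hv.2⟩, hv.2⟩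
    by_cases hb₁ : b₁ = sVert Sp s
    · subst hb₁
      by_cases hb₂ : b₂ = sVert Sp s
      · subst hb₂
        rw [(SimpleGraph.Walk.isPath_iff_eq_nil (p := p)).mp hp, SimpleGraph.Walk.support_nil,
          List.mem_singleton] at hb
        exact absurd hb hbs
      · exact keyS b₂ hb₂ p hp hb
    · by_cases hb₂ : b₂ = sVert Sp s
      · subst hb₂
        rw [Set.inter_comm]
        exact keyS b₁ hb₁ p.reverse hp.reverse
          (by rw [SimpleGraph.Walk.support_reverse]; exact List.mem_reverse.mpr hb)
      · have hb₁Sp : (b₁ : V) ∈ Sp := by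
          rcases b₁.2 with h | h
          · exact h
          · exact absurd (Subtype.ext (show b₁.1 = s from h)) hb₁
        have hb₂Sp : (b₂ : V) ∈ Sp := by
          rcases b₂.2 with h | h
          · exact h
          · exact absurd (Subtype.ext (show b₂.1 = s from h)) hb₂
        have hns : sVert Sp s ∉ p.support := by
          intro hm
          rcases sVert_endpoint hsSp p hp hm with h | h
          exacts [hb₁ h.symm, hb₂ h.symm]
        exact key _ _ hb₁Sp hb₂Sp p hp hns hb
end

section
/- Let H⃗ be a directed weighted graph with hubset S and unique reachability graph UR on vertex set S' ⊆ S. Suppose s₁,...,s_l ∈ S form a cycle in UR (l ≥ 3). For each i, the set C(s_i, s_{i+1}) of vertices reachable from both s_i and s_{i+1} but from no other s_j is nonempty, and for i ≠ j there is no edge of the underlying undirected graph connecting a vertex of C(s_i, s_{i+1}) to a vertex of C(s_j, s_{j+1}). -/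
variable {V : Type*}

/-- The set of vertices reachable from some vertex of `A`. -/
def ReachS (D : V → V → Prop) (A : Set V) : Set V := ⋃ s ∈ A, Reach D s

/-- The edge relation of the unique reachability graph `UR_{S'}`. -/
def URAdj (D : V → V → Prop) (S' : Set V) (s₁ s₂ : V) : Prop :=
  s₁ ≠ s₂ ∧ ((Reach D s₁ ∩ Reach D s₂) \ ReachS D (S' \ {s₁, s₂})).Nonempty

/-- The region `C(s₁,s₂)`: vertices reachable from both `s₁` and `s₂` but from no other
element of `S'`. -/
def CReg (D : V → V → Prop) (S' : Set V) (s₁ s₂ : V) : Set V :=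
  (Reach D s₁ ∩ Reach D s₂) \ ReachS D (S' \ {s₁, s₂})

/-- if `s₁,…,s_l` (`l ≥ 3`) form a cycle in the unique reachability graph
`UR_{S'}` of a directed weighted graph with hubset `S ⊇ S'`, then each region
`C(s_i, s_{i+1})` is nonempty and, for `i ≠ j`, no (undirected) edge joins a vertex of
`C(s_i, s_{i+1})` to a vertex of `C(s_j, s_{j+1})`. -/
theorem stmt13 (D : V → V → Prop) (W : V → V → ℕ)
    (S : Set V) (hS : IsHubset D S) (S' : Set V) (hS' : S' ⊆ S)
    (l : ℕ) (hl : 3 ≤ l) (f : ZMod l → V)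
    (hinj : Function.Injective f) (hmem : ∀ i, f i ∈ S')
    (hcyc : ∀ i, URAdj D S' (f i) (f (i + 1))) :
    (∀ i, (CReg D S' (f i) (f (i + 1))).Nonempty) ∧
    (∀ i j, i ≠ j →
      ∀ x ∈ CReg D S' (f i) (f (i + 1)), ∀ y ∈ CReg D S' (f j) (f (j + 1)),
        ¬ (D x y ∨ D y x)) := by
  have h2 : (2 : ZMod l) ≠ 0 := by
    have : NeZero l := ⟨by omega⟩
    intro h
    have hd : l ∣ 2 := by
      have : ((2 : ℕ) : ZMod l) = 0 := by exact_mod_cast h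
      exact (ZMod.natCast_eq_zero_iff 2 l).mp this
    have := Nat.le_of_dvd (by norm_num) hd
    omega
  -- key: for i ≠ j, some element of {f i, f (i+1)} avoids {f j, f (j+1)}
  have key : ∀ i j : ZMod l, i ≠ j →
      (f i ∉ ({f j, f (j + 1)} : Set V) ∨ f (i + 1) ∉ ({f j, f (j + 1)} : Set V)) := by
    intro i j hij
    by_contra h
    push_neg at h
    obtain ⟨h1, h2'⟩ := h
    have hi : i = j + 1 := by
      rcases h1 with h1 | h1
      · exact absurd (hinj h1) hij
      · exact hinj h1
    have hj : i + 1 = j := by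
      rcases h2' with h' | h'
      · exact hinj h'
      · exact absurd (by have := hinj h'; exact add_right_cancel this) hij
    have heq : i = i + 2 := by
      calc i = j + 1 := hi
        _ = (i + 1) + 1 := by rw [hj]
        _ = i + 2 := by ring
    exact h2 (left_eq_add.mp heq)
  constructor
  · intro i; exact (hcyc i).2
  · rintro i j hij x hx y hy (hD | hD)
    · -- y is reachable from f i or f (i+1), both ≠ {f j, f (j+1)} for one of them
      rcases key i j hij with hs | hs
      · exact hy.2 (Set.mem_biUnion ⟨hmem i, hs⟩
          (Relation.ReflTransGen.tail hx.1.1 hD))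
      · exact hy.2 (Set.mem_biUnion ⟨hmem (i + 1), hs⟩
          (Relation.ReflTransGen.tail hx.1.2 hD))
    · rcases key j i hij.symm with hs | hs
      · exact hx.2 (Set.mem_biUnion ⟨hmem j, hs⟩
          (Relation.ReflTransGen.tail hy.1.1 hD))
      · exact hx.2 (Set.mem_biUnion ⟨hmem (j + 1), hs⟩
          (Relation.ReflTransGen.tail hy.1.2 hD))
end

section
/- Let H⃗ be a directed graph with hubset S such that the unique reachability graph UR_S of every subset of S is acyclic (a forest). Then H⃗ admits a hub-tree decomposition of width one. -/
variable {V : Type*}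

/-- The unique reachability graph on the vertex set `Sp`. -/
def URGraph (D : V → V → Prop) (Sp : Set V) : SimpleGraph Sp :=
  SimpleGraph.fromRel fun a b => URAdj D Sp (a : V) (b : V)

open SimpleGraph

section GraphLemmas

variable {β : Type*} {G : SimpleGraph β}

/-- If a path starts with the edge `u-z`, any edge of the path containing `u` goes to `z`. -/
private lemma edge_start_eq {u v z c : β} (h1 : G.Adj u z) (q : G.Walk z v)
    (hp : (Walk.cons h1 q).IsPath) (hc : s(u, c) ∈ (Walk.cons h1 q).edges) :
    c = z := by
  rw [Walk.edges_cons, List.mem_cons] at hc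
  rcases hc with hc | hc
  · rcases Sym2.eq_iff.mp hc with ⟨-, h⟩ | ⟨h', -⟩
    · exact h
    · exact absurd h' h1.ne
  · exact absurd (q.fst_mem_support_of_mem_edges hc)
      ((Walk.cons_isPath_iff h1 q).mp hp).2

private lemma path_start_ne_end {u v : β} {p : G.Walk u v} (hp : p.IsPath)
    (hl : 0 < p.length) : u ≠ v := by
  cases p with
  | nil => simp at hl
  | cons h q =>
    rintro rfl
    exact ((Walk.cons_isPath_iff _ _).mp hp).2 q.end_mem_support

/-- A nonnil walk decomposes as a walk plus a final edge. -/
private lemma exists_concat {m u : β} (p : G.Walk m u) (hmu : m ≠ u) :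
    ∃ (x : β) (q : G.Walk m x) (h : G.Adj x u), p = q.concat h := by
  have hnil : ¬p.reverse.Nil := Walk.not_nil_of_ne (Ne.symm hmu)
  obtain ⟨x, h, q, heq⟩ := Walk.not_nil_iff.mp hnil
  refine ⟨x, q.reverse, h.symm, ?_⟩
  rw [← Walk.reverse_reverse p, heq, Walk.reverse_cons, Walk.concat]

/-- The starting point of a longest path has a unique neighbor. -/
private lemma exists_unique_nbr_of_max (hG : G.IsAcyclic) {u v : β}
    (p : G.Walk u v) (hp : p.IsPath) (hpos : 0 < p.length)
    (hmax : ∀ (a b : β) (q : G.Walk a b), q.IsPath → q.length ≤ p.length) :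
    ∃ z, G.Adj u z ∧ ∀ c, G.Adj u c → c = z := by
  classical
  cases p with
  | nil => simp at hpos
  | cons h q =>
    rename_i z
    refine ⟨z, h, fun c hc => ?_⟩
    by_cases hcs : c ∈ (Walk.cons h q).support
    · have hr : ((Walk.cons h q).takeUntil c hcs).IsPath := hp.takeUntil hcs
      by_cases hedge : s(c, u) ∈ ((Walk.cons h q).takeUntil c hcs).edges
      · have h2 : s(u, c) ∈ (Walk.cons h q).edges := by
          have := Walk.edges_takeUntil_subset (Walk.cons h q) hcs hedge
          rwa [Sym2.eq_swap] at this
        exact edge_start_eq h q hp h2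
      · exact absurd (SimpleGraph.Path.cons_isCycle ⟨_, hr⟩ hc.symm hedge) (hG _)
    · have hP' : (Walk.cons hc.symm (Walk.cons h q)).IsPath := hp.cons hcs
      have := hmax _ _ _ hP'
      simp only [Walk.length_cons] at this
      omega

private lemma exists_two_leaves [Finite β] (hG : G.IsAcyclic) {a₀ b₀ : β}
    (h₀ : G.Adj a₀ b₀) :
    ∃ u zu v zv, u ≠ v ∧ G.Adj u zu ∧ (∀ c, G.Adj u c → c = zu) ∧
      G.Adj v zv ∧ (∀ c, G.Adj v c → c = zv) := by
  classical
  haveI : Fintype β := Fintype.ofFinite β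
  set n := Fintype.card β with hn
  set Pr : ℕ → Prop := fun k => ∃ (a b : β) (q : G.Walk a b), q.IsPath ∧ q.length = k
    with hPrdef
  have h1 : Pr 1 := by
    refine ⟨a₀, b₀, Walk.cons h₀ Walk.nil, ?_, by simp⟩
    simp [Walk.isPath_def, h₀.ne]
  have hbound : ∀ k, Pr k → k ≤ n := by
    rintro k ⟨a, b, q, hq, rfl⟩
    exact hq.length_lt.le
  have hn1 : 1 ≤ n := hbound 1 h1
  have hPrm : Pr (Nat.findGreatest Pr n) := Nat.findGreatest_spec hn1 h1
  obtain ⟨a, b, p, hp, hlen⟩ := hPrm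
  have hpos : 0 < p.length := by
    rw [hlen]; exact lt_of_lt_of_le Nat.one_pos (Nat.le_findGreatest hn1 h1)
  have hmax : ∀ (x y : β) (q : G.Walk x y), q.IsPath → q.length ≤ p.length := by
    intro x y q hq
    rw [hlen]
    by_contra hlt
    push_neg at hlt
    exact Nat.findGreatest_is_greatest hlt (hbound _ ⟨x, y, q, hq, rfl⟩)
      ⟨x, y, q, hq, rfl⟩
  obtain ⟨zu, hu, huniq⟩ := exists_unique_nbr_of_max hG p hp hpos hmax
  obtain ⟨zv, hv, hvniq⟩ := exists_unique_nbr_of_max hG p.reverse hp.reverse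
    (by simpa using hpos) (fun x y q hq => by simpa using hmax x y q hq)
  exact ⟨a, zu, b, zv, path_start_ne_end hp hpos, hu, huniq, hv, hvniq⟩

end GraphLemmas

section Scaffold

variable [Finite V] (D : V → V → Prop) (S : Set V)

/-- An intermediate structure: a tree on the sub-finset `W` of hubs, such that
each set `{s | w ∈ Reach D s}` is convex. -/
structure Scaffold (W : Finset ↥S) where
  T : SimpleGraph ↥S
  mem_left : ∀ {a b : ↥S}, T.Adj a b → a ∈ W
  conn : ∀ a ∈ W, ∀ b ∈ W, T.Reachable a b
  acyclic : T.IsAcyclic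
  convex : ∀ (w : V) (a b : ↥S) (p : T.Walk a b), p.IsPath →
    w ∈ Reach D (a : V) → w ∈ Reach D (b : V) → ∀ c ∈ p.support, w ∈ Reach D (c : V)

theorem scaffold_exists (hforest : ∀ Sp ⊆ S, (URGraph D Sp).IsAcyclic) :
    ∀ (n : ℕ) (W : Finset ↥S), W.card ≤ n → W.Nonempty → Nonempty (Scaffold D S W) := by
  classical
  intro n
  induction n with
  | zero =>
    intro W hcard hne
    exact absurd (Finset.card_eq_zero.mp (Nat.le_zero.mp hcard)) hne.ne_empty
  | succ n ih =>
    intro W hcard hne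
    by_cases hsmall : W.card ≤ n
    · exact ih W hsmall hne
    · rcases eq_or_lt_of_le (show 1 ≤ W.card from hne.card_pos) with h1 | h2
      · -- base case : single vertex
        obtain ⟨a, rfl⟩ := Finset.card_eq_one.mp h1.symm
        refine ⟨⟨⊥, ?_, ?_, ?_, ?_⟩⟩
        · intro x y h; simp at h
        · intro x hx y hy
          rw [Finset.mem_singleton] at hx hy
          rw [hx, hy]
        · exact isAcyclic_bot
        · intro w x y p hp hwx hwy c hc
          cases p with
          | nil => simp at hc; rwa [hc]
          | cons h q => simp at h
      · -- inductive case, |W| ≥ 2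
        have hcard' : W.card = n + 1 := le_antisymm hcard (not_le.mp hsmall)
        -- Step 1 : find a "reducible" pair (b,t)
        have hE : ∃ b ∈ W, ∃ t ∈ W, b ≠ t ∧ ∀ w : V, w ∈ Reach D (b : V) →
            (∃ y ∈ W, w ∈ Reach D (y : V) ∧ y ≠ b) → w ∈ Reach D (t : V) := by
          by_cases hc2 : W.card = 2
          · obtain ⟨b, t, hbt, hW2⟩ := Finset.card_eq_two.mp hc2
            refine ⟨b, by simp [hW2], t, by simp [hW2], hbt, ?_⟩
            rintro w hwb ⟨y, hyW, hwy, hyb⟩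
            rw [hW2, Finset.mem_insert, Finset.mem_singleton] at hyW
            rcases hyW with rfl | rfl
            · exact absurd rfl hyb
            · exact hwy
          · -- |W| ≥ 3
            have hc3 : 3 ≤ W.card := by omega
            by_contra hno
            push_neg at hno
            have hpart : ∀ x ∈ W, ∃ u v : ↥S, u ∈ W ∧ v ∈ W ∧ u ≠ v ∧ u ≠ x ∧ v ≠ x ∧
                (∃ w : V, w ∈ Reach D (u:V) ∧ w ∈ Reach D (x:V) ∧
                  ∀ m ∈ W, w ∈ Reach D (m:V) → m = u ∨ m = x) ∧
                (∃ w : V, w ∈ Reach D (v:V) ∧ w ∈ Reach D (x:V) ∧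
                  ∀ m ∈ W, w ∈ Reach D (m:V) → m = v ∨ m = x) := by
              intro x hx
              have hW'card : (W.erase x).card ≤ n := by
                rw [Finset.card_erase_of_mem hx]; omega
              have hW'2 : 1 < (W.erase x).card := by
                rw [Finset.card_erase_of_mem hx]; omega
              obtain ⟨sc'⟩ := ih (W.erase x) hW'card (Finset.card_pos.mp (by omega))
              obtain ⟨y0, hy0, z0, hz0, hyz0⟩ := Finset.one_lt_card.mp hW'2
              have hedge : ∃ a b : ↥S, sc'.T.Adj a b := by
                rcases sc'.conn y0 hy0 z0 hz0 with ⟨pw⟩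
                cases pw with
                | nil => exact absurd rfl hyz0
                | cons h q => exact ⟨_, _, h⟩
              obtain ⟨a0, b0, h0⟩ := hedge
              obtain ⟨u, zu, v, zv, huv, hu, huniq, hv, hvniq⟩ :=
                exists_two_leaves sc'.acyclic h0
              have key : ∀ (lu lz : ↥S), sc'.T.Adj lu lz → (∀ c, sc'.T.Adj lu c → c = lz) →
                  lu ∈ W ∧ lu ≠ x ∧ ∃ w : V, w ∈ Reach D (lu:V) ∧ w ∈ Reach D (x:V) ∧
                    ∀ m ∈ W, w ∈ Reach D (m:V) → m = lu ∨ m = x := by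
                intro lu lz hadj huni
                have hluW' : lu ∈ W.erase x := sc'.mem_left hadj
                have hlzW' : lz ∈ W.erase x := sc'.mem_left hadj.symm
                have hluW : lu ∈ W := Finset.mem_of_mem_erase hluW'
                have hlzW : lz ∈ W := Finset.mem_of_mem_erase hlzW'
                obtain ⟨w, hw1, ⟨y, hyW, hwy, hyne⟩, hw3⟩ := hno lu hluW lz hlzW hadj.ne
                have hm : ∀ m ∈ W.erase x, w ∈ Reach D (m:V) → m = lu := by
                  intro m hmm hwm
                  by_contra hnem
                  rcases sc'.conn m hmm lu hluW' with ⟨pw⟩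
                  have hp' : (pw.toPath : sc'.T.Walk m lu).IsPath := pw.toPath.2
                  obtain ⟨xx, q, hlast, heq⟩ := exists_concat (pw.toPath : sc'.T.Walk m lu) hnem
                  have hxx : xx = lz := huni xx hlast.symm
                  have hsupp : lz ∈ (pw.toPath : sc'.T.Walk m lu).support := by
                    rw [heq, Walk.support_concat, List.mem_append]
                    exact Or.inl (hxx ▸ q.end_mem_support)
                  exact hw3 (sc'.convex w m lu _ hp' hwm hw1 lz hsupp)
                have hxK : w ∈ Reach D (x:V) := by
                  by_cases hyx : y = x
                  · exact hyx ▸ hwy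
                  · exact absurd (hm y (Finset.mem_erase.mpr ⟨hyx, hyW⟩) hwy) hyne
                refine ⟨hluW, (Finset.mem_erase.mp hluW').1, w, hw1, hxK, fun m hmW hwm => ?_⟩
                by_cases hmx : m = x
                · exact Or.inr hmx
                · exact Or.inl (hm m (Finset.mem_erase.mpr ⟨hmx, hmW⟩) hwm)
              obtain ⟨huW, hux, wu, hwu⟩ := key u zu hu huniq
              obtain ⟨hvW, hvx, wv, hwv⟩ := key v zv hv hvniq
              exact ⟨u, v, huW, hvW, huv, hux, hvx, ⟨wu, hwu⟩, ⟨wv, hwv⟩⟩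
            -- Step 2 : contradiction in the UR graph
            set Sp : Set V := Subtype.val '' (↑W : Set ↥S) with hSpdef
            have hSpS : Sp ⊆ S := by rintro v' ⟨m, hm, rfl⟩; exact m.2
            have acyc := hforest Sp hSpS
            have hmemSp : ∀ m : ↥S, m ∈ W → (m : V) ∈ Sp :=
              fun m hm => ⟨m, Finset.mem_coe.mpr hm, rfl⟩
            have hadjUR : ∀ (x u : ↥S) (hx : x ∈ W) (hu : u ∈ W), u ≠ x →
                (∃ w : V, w ∈ Reach D (u:V) ∧ w ∈ Reach D (x:V) ∧
                  ∀ m ∈ W, w ∈ Reach D (m:V) → m = u ∨ m = x) →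
                (URGraph D Sp).Adj ⟨(x:V), hmemSp x hx⟩ ⟨(u:V), hmemSp u hu⟩ := by
              rintro x u hx hu hne ⟨w, hw1, hw2, hw3⟩
              have hvalne : (x : V) ≠ (u : V) := fun h => hne (Subtype.ext h).symm
              have hnotR : w ∉ ReachS D (Sp \ {(u:V), (x:V)}) := by
                intro hmem
                simp only [ReachS, Set.mem_iUnion] at hmem
                obtain ⟨s, hs, hws⟩ := hmem
                obtain ⟨hsSp, hsne⟩ := hs
                obtain ⟨m, hmW, rfl⟩ := hsSp
                rcases hw3 m (Finset.mem_coe.mp hmW) hws with rfl | rfl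
                · exact hsne (Or.inl rfl)
                · exact hsne (Or.inr rfl)
              refine (SimpleGraph.fromRel_adj _ _ _).mpr
                ⟨fun h => hvalne (congrArg (fun z : ↥Sp => (z : V)) h),
                 Or.inr ⟨hvalne.symm, ⟨w, ⟨⟨hw1, hw2⟩, hnotR⟩⟩⟩⟩
            haveI : Finite ↥Sp := Set.toFinite Sp |>.to_subtype
            obtain ⟨x0, hx0⟩ := hne
            obtain ⟨u0, v0, hu0W, hv0W, -, hu0x, -, hww0, -⟩ := hpart x0 hx0
            have e0 := hadjUR x0 u0 hx0 hu0W hu0x hww0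
            obtain ⟨L, zL, L', zL', -, hL, hLuniq, -, -⟩ := exists_two_leaves acyc e0
            obtain ⟨m0, hm0W, hm0⟩ := L.2
            have hm0W' : m0 ∈ W := Finset.mem_coe.mp hm0W
            obtain ⟨u1, v1, hu1W, hv1W, hu1v1, hu1x, hv1x, h1, h2⟩ := hpart m0 hm0W'
            have hLeq : L = ⟨(m0 : V), hmemSp m0 hm0W'⟩ := Subtype.ext hm0.symm
            have e1 := hadjUR m0 u1 hm0W' hu1W hu1x h1
            have e2 := hadjUR m0 v1 hm0W' hv1W hv1x h2
            rw [← hLeq] at e1 e2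
            have e1' := hLuniq ⟨(u1:V), hmemSp u1 hu1W⟩ e1
            have e2' := hLuniq ⟨(v1:V), hmemSp v1 hv1W⟩ e2
            have heq12 : (⟨(u1:V), hmemSp u1 hu1W⟩ : ↥Sp) = ⟨(v1:V), hmemSp v1 hv1W⟩ :=
              e1'.trans e2'.symm
            exact hu1v1 (Subtype.ext (congrArg (fun z : ↥Sp => (z : V)) heq12))
        obtain ⟨b, hbW, t, htW, hbt, hEprop⟩ := hE
        -- Step 3 : build the scaffold by attaching leaf b to t
        have htWb : t ∈ W.erase b := Finset.mem_erase.mpr ⟨hbt.symm, htW⟩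
        have hWbcard : (W.erase b).card ≤ n := by
          rw [Finset.card_erase_of_mem hbW]; omega
        obtain ⟨sc'⟩ := ih (W.erase b) hWbcard ⟨t, htWb⟩
        set T : SimpleGraph ↥S := sc'.T ⊔ SimpleGraph.fromEdgeSet {s(b, t)} with hTdef
        have hTadj : ∀ x y : ↥S, T.Adj x y ↔
            (sc'.T.Adj x y ∨ ((x = b ∧ y = t) ∨ (x = t ∧ y = b))) := by
          intro x y
          rw [hTdef, SimpleGraph.sup_adj, SimpleGraph.fromEdgeSet_adj]
          constructor
          · rintro (h | ⟨he, hne⟩)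
            · exact Or.inl h
            · rw [Set.mem_singleton_iff, Sym2.eq_iff] at he
              exact Or.inr he
          · rintro (h | ⟨rfl, rfl⟩ | ⟨rfl, rfl⟩)
            · exact Or.inl h
            · exact Or.inr ⟨by simp, hbt⟩
            · exact Or.inr ⟨by simp [Sym2.eq_swap], hbt.symm⟩
        have hbnbr : ∀ c, T.Adj b c → c = t := by
          intro c hc
          rcases (hTadj b c).mp hc with h | ⟨-, rfl⟩ | ⟨hbt', -⟩
          · exact absurd (sc'.mem_left h) (Finset.notMem_erase b W)
          · rfl
          · exact absurd hbt' hbt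
        have hTedges : ∀ {x y : ↥S} (p : T.Walk x y), b ∉ p.support →
            ∀ e ∈ p.edges, e ∈ sc'.T.edgeSet := by
          intro x y p hbp e he
          induction e using Sym2.ind with
          | _ c d =>
            have hadj : T.Adj c d := p.adj_of_mem_edges he
            rcases (hTadj c d).mp hadj with h | ⟨rfl, rfl⟩ | ⟨rfl, rfl⟩
            · exact h
            · exact absurd (p.fst_mem_support_of_mem_edges he) hbp
            · exact absurd (p.snd_mem_support_of_mem_edges he) hbp
        have hmem_left : ∀ {x y : ↥S}, T.Adj x y → x ∈ W := by
          intro x y h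
          rcases (hTadj x y).mp h with h | ⟨rfl, -⟩ | ⟨rfl, -⟩
          · exact Finset.mem_of_mem_erase (sc'.mem_left h)
          · exact hbW
          · exact htW
        have hbtadj : T.Adj b t := (hTadj b t).mpr (Or.inr (Or.inl ⟨rfl, rfl⟩))
        have hmono : sc'.T ≤ T := le_sup_left
        refine ⟨⟨T, hmem_left, ?_, ?_, ?_⟩⟩
        · -- conn
          intro x hxW y hyW
          by_cases hxb : x = b <;> by_cases hyb : y = b
          · rw [hxb, hyb]
          · rw [hxb]
            exact hbtadj.reachable.trans
              ((sc'.conn t htWb y (Finset.mem_erase.mpr ⟨hyb, hyW⟩)).mono hmono)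
          · rw [hyb]
            exact (((sc'.conn x (Finset.mem_erase.mpr ⟨hxb, hxW⟩) t htWb)).mono hmono).trans
              hbtadj.symm.reachable
          · exact ((sc'.conn x (Finset.mem_erase.mpr ⟨hxb, hxW⟩) y
              (Finset.mem_erase.mpr ⟨hyb, hyW⟩))).mono hmono
        · -- acyclic
          intro v0 c hc
          by_cases hbs : b ∈ c.support
          · have hc2 := hc.rotate hbs
            obtain ⟨z, hz, q, heq⟩ := Walk.not_nil_iff.mp hc2.not_nil
            have hzt : t = z := (hbnbr z hz).symm
            subst hzt
            obtain ⟨x, q', hlast, heq'⟩ := exists_concat q (Ne.symm hbt)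
            have hxt : t = x := (hbnbr x hlast.symm).symm
            subst hxt
            have hnodup := hc2.isCircuit.isTrail.edges_nodup
            rw [heq, Walk.edges_cons] at hnodup
            have hmem : s(b, t) ∈ q.edges := by
              rw [heq', Walk.edges_concat, List.concat_eq_append, List.mem_append]
              exact Or.inr (by simp [Sym2.eq_swap])
            exact (List.nodup_cons.mp hnodup).1 hmem
          · exact sc'.acyclic (c.transfer sc'.T (hTedges c hbs))
              (hc.transfer (hTedges c hbs))
        · -- convex
          have aux : ∀ (w : V) (a : ↥S) (p : T.Walk a b), p.IsPath →
              w ∈ Reach D (a : V) → w ∈ Reach D (b : V) →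
              ∀ cc ∈ p.support, w ∈ Reach D (cc : V) := by
            intro w a p hp hwa hwb cc hcc
            by_cases hab : a = b
            · subst hab
              have hnil : p = Walk.nil := by
                cases p with
                | nil => rfl
                | cons h q =>
                  exact absurd q.end_mem_support ((Walk.cons_isPath_iff _ _).mp hp).2
              rw [hnil] at hcc
              simp only [Walk.support_nil, List.mem_singleton] at hcc
              rwa [hcc]
            · obtain ⟨x, q, hlast, heq⟩ := exists_concat p hab
              have hxt : t = x := (hbnbr x hlast.symm).symm
              subst hxt
              have hsupp : p.support = q.support ++ [b] := by
                rw [heq, Walk.support_concat]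
              have hnodup : p.support.Nodup := (Walk.isPath_def p).mp hp
              rw [hsupp, List.nodup_append] at hnodup
              obtain ⟨hqnodup, -, hdisj⟩ := hnodup
              have hbq : b ∉ q.support := fun hmem => hdisj b hmem b (List.mem_singleton_self b) rfl
              have hqpath : q.IsPath := (Walk.isPath_def q).mpr hqnodup
              have haW : a ∈ W := by
                cases q with
                | nil => exact htW
                | cons h q2 => exact hmem_left h
              have hwt : w ∈ Reach D (t : V) := hEprop w hwb ⟨a, haW, hwa, hab⟩
              have hconv := sc'.convex w a t (q.transfer sc'.T (hTedges q hbq))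
                (hqpath.transfer _) hwa hwt
              rw [hsupp, List.mem_append] at hcc
              rcases hcc with hcc | hcc
              · exact hconv cc (by rwa [Walk.support_transfer])
              · rw [List.mem_singleton] at hcc
                rwa [hcc]
          intro w a c p hp hwa hwc cc hcc
          by_cases hbs : b ∈ p.support
          · by_cases hcb : c = b
            · subst hcb; exact aux w a p hp hwa hwc cc hcc
            · by_cases hab2 : a = b
              · subst hab2
                exact aux w c p.reverse hp.reverse hwc hwa cc
                  (by rwa [Walk.support_reverse, List.mem_reverse])
              · exfalso
                have hp1 : (p.takeUntil b hbs).IsPath := hp.takeUntil hbs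
                obtain ⟨x1, q1, hl1, he1⟩ := exists_concat (p.takeUntil b hbs) hab2
                have hx1 : x1 = t := hbnbr x1 hl1.symm
                have ht1 : t ∈ (p.takeUntil b hbs).support := by
                  rw [he1, Walk.support_concat, List.mem_append]
                  exact Or.inl (hx1 ▸ q1.end_mem_support)
                obtain ⟨z2, h2, q2, he2⟩ := Walk.not_nil_iff.mp
                  (Walk.not_nil_of_ne (fun h => hcb h.symm) : ¬(p.dropUntil b hbs).Nil)
                have hz2 : z2 = t := hbnbr z2 h2
                have ht2 : t ∈ (p.dropUntil b hbs).support.tail := by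
                  rw [he2]
                  simp only [Walk.support_cons, List.tail_cons]
                  exact hz2 ▸ q2.start_mem_support
                have hps : p.support = (p.takeUntil b hbs).support
                    ++ (p.dropUntil b hbs).support.tail := by
                  conv_lhs => rw [← Walk.take_spec p hbs]
                  rw [Walk.support_append]
                have hnodup := (Walk.isPath_def p).mp hp
                rw [hps, List.nodup_append] at hnodup
                exact hnodup.2.2 t ht1 t ht2 rfl
          · have hconv := sc'.convex w a c (p.transfer sc'.T (hTedges p hbs))
              (hp.transfer _) hwa hwc
            exact hconv cc (by rwa [Walk.support_transfer])

end Scaffold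

/-- if the unique reachability graph of every subset of the hubset `S` is
acyclic, then the directed graph admits a hub-tree decomposition of width one. -/
theorem stmt15 [Finite V] [Nonempty V] (D : V → V → Prop) (S : Set V)
    (hS : IsHubset D S)
    (hforest : ∀ Sp ⊆ S, (URGraph D Sp).IsAcyclic) :
    ∃ T : SimpleGraph S, IsWidthOneDecomp D S T := by
  classical
  haveI : Nonempty ↥S := by
    obtain ⟨v⟩ := ‹Nonempty V›
    by_cases hv : v ∈ S
    · exact ⟨⟨v, hv⟩⟩
    · obtain ⟨s, hs, -⟩ := hS.2 v hv
      exact ⟨⟨s, hs⟩⟩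
  haveI : Fintype ↥S := Fintype.ofFinite _
  obtain ⟨sc⟩ := scaffold_exists D S hforest (Fintype.card ↥S) Finset.univ
    Finset.card_univ.le Finset.univ_nonempty
  refine ⟨sc.T, ⟨?_, ?_⟩, ?_⟩
  · exact (connected_iff (G := sc.T)).mpr
      ⟨fun a b => sc.conn a (Finset.mem_univ a) b (Finset.mem_univ b), ‹_›⟩
  · exact sc.acyclic
  · intro b b₁ b₂ p hp hb w hw
    exact sc.convex w b₁ b₂ p hp hw.1 hw.2 b hb
end
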